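/- Let m be an even positive integer, k a positive integer, and s an integer with v_2(k) ≤ v_2(m) and gcd(2^k + 2s + 1, 2^m - 1) = 1. Then the polynomial f(x) = x^{2^{k+m}+s·2^{m+1}+2^m} + x^{2^{k+m}+s·2^m+2^m+s} + x^{2^{k+m}+2^m+2s} + x^{s·2^{m+1}+2^m+2^k} + x^{s·2^{m+1}+2^k+1} + x^{s·2^m+2^m+2^k+s} + x^{s·2^m+2^k+s+1} + x^{2^m+2^k+2s} + x^{2^k+2s+1} is a permutation polynomial of F_{2^{2m}}. -/

import Mathlib

private theorem gcd_two_mul_aux (m k : ℕ) (hm : 0 < m) (hk : 0 < k)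
    (hv : padicValNat 2 k ≤ padicValNat 2 m) : Nat.gcd k (2*m) = Nat.gcd k m := by
  apply Nat.dvd_antisymm
  · apply Nat.dvd_gcd (Nat.gcd_dvd_left _ _)
    set a := Nat.gcd k (2*m) with ha
    have hapos : 0 < a := Nat.gcd_pos_of_pos_left _ hk
    have hak : a ∣ k := Nat.gcd_dvd_left _ _
    have ham : a ∣ 2*m := Nat.gcd_dvd_right _ _
    rw [← Nat.factorization_le_iff_dvd hapos.ne' hm.ne']
    intro p
    by_cases hp : p.Prime
    · by_cases hp2 : p = 2
      · subst hp2
        have h1 : a.factorization 2 ≤ k.factorization 2 :=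
          (Nat.factorization_le_iff_dvd hapos.ne' hk.ne').mpr hak 2
        have h2 : k.factorization 2 = padicValNat 2 k := Nat.factorization_def k Nat.prime_two
        have h3 : m.factorization 2 = padicValNat 2 m := Nat.factorization_def m Nat.prime_two
        omega
      · have h1 : a.factorization p ≤ (2*m).factorization p :=
          (Nat.factorization_le_iff_dvd hapos.ne' (by positivity)).mpr ham p
        have h2 : (Nat.factorization 2) p = 0 := by
          rw [Nat.Prime.factorization Nat.prime_two]
          simp [Finsupp.single_apply]; omega
        rw [Nat.factorization_mul (by norm_num) hm.ne'] at h1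
        simp only [Finsupp.add_apply] at h1
        omega
    · simp [Nat.factorization_eq_zero_of_not_prime _ hp]
  · exact Nat.dvd_gcd (Nat.gcd_dvd_left _ _) ((Nat.gcd_dvd_right _ _).trans (dvd_mul_left m 2))

section auxfield
variable {F : Type*} [Field F]

private theorem pow_frob_mul (z : F) (r j : ℕ) (h : z^(2^r) = z) : z^(2^(r*j)) = z := by
  induction j with
  | zero => simp
  | succ n ih =>
    have h2 : 2^(r*(n+1)) = 2^(r*n) * 2^r := by rw [← pow_add]; ring_nf
    rw [h2, pow_mul, ih, h]

private theorem pow_frob_dvd (z : F) (g n : ℕ) (hdvd : g ∣ n) (h : z^(2^g) = z) :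
    z^(2^n) = z := by
  obtain ⟨j, rfl⟩ := hdvd
  exact pow_frob_mul z g j h

private theorem pow_frob_gcd (z : F) : ∀ r t : ℕ, z^(2^r) = z → z^(2^t) = z →
    z^(2^(Nat.gcd r t)) = z := by
  intro r t
  induction r, t using Nat.gcd.induction with
  | H0 t => intro _ h; simpa using h
  | H1 r t hr ih =>
    intro h1 h2
    rw [Nat.gcd_rec]
    apply ih _ h1
    have hsplit : t = r * (t / r) + t % r := (Nat.div_add_mod t r).symm
    calc z^(2^(t % r)) = (z^(2^(r * (t/r))))^(2^(t % r)) := by rw [pow_frob_mul z r _ h1]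
    _ = z^(2^(r * (t/r)) * 2^(t % r)) := (pow_mul z _ _).symm
    _ = z^(2^t) := by rw [← pow_add, ← hsplit]
    _ = z := h2

private theorem master_id (htwo : (2:F) = 0) (x T X U b bK : F)
    (hb : b = x + T) (hbK : bK = X + U) :
    (X*x + x + 1)*(bK*b + bK + 1) + (X*x + X + 1)*(bK*b + b + 1)
      = T*(X^2+X+1) + U*(x^2+x+1) + U*T*(X+x) := by
  subst hb hbK
  linear_combination (x^2*X^2 + x*T*X^2 + x^2*X*U + x*T*X*U + x*X^2 + x*X*U + 3*x*X
    + x^2*X + x*T*X + x*U + x + T*X + T*U + X + 1) * htwo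

private theorem split9 (m k s : ℕ) (x : F) :
    x ^ (2 ^ (k + m) + s * 2 ^ (m + 1) + 2 ^ m)
        + x ^ (2 ^ (k + m) + s * 2 ^ m + 2 ^ m + s)
        + x ^ (2 ^ (k + m) + 2 ^ m + 2 * s)
        + x ^ (s * 2 ^ (m + 1) + 2 ^ m + 2 ^ k)
        + x ^ (s * 2 ^ (m + 1) + 2 ^ k + 1)
        + x ^ (s * 2 ^ m + 2 ^ m + 2 ^ k + s)
        + x ^ (s * 2 ^ m + 2 ^ k + s + 1)
        + x ^ (2 ^ m + 2 ^ k + 2 * s)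
        + x ^ (2 ^ k + 2 * s + 1)
      = (x^(2^k+1) + x^(2^k) * x^(2^m) + (x^(2^m))^(2^k+1))
        * (x^(2*s) + x^s * (x^(2^m))^s + (x^(2^m))^(2*s)) := by
  have e1 : 2^(k+m) + s*2^(m+1) + 2^m = 2^m*(2^k+1) + 2^m*(2*s) := by
    rw [pow_add 2 k m, pow_succ 2 m]; ring
  have e2 : 2^(k+m) + s*2^m + 2^m + s = 2^m*(2^k+1) + (s + 2^m*s) := by
    rw [pow_add 2 k m]; ring
  have e3 : 2^(k+m) + 2^m + 2*s = 2^m*(2^k+1) + 2*s := by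
    rw [pow_add 2 k m]; ring
  have e4 : s*2^(m+1) + 2^m + 2^k = (2^k + 2^m) + 2^m*(2*s) := by
    rw [pow_succ 2 m]; ring
  have e5 : s*2^(m+1) + 2^k + 1 = (2^k+1) + 2^m*(2*s) := by
    rw [pow_succ 2 m]; ring
  have e6 : s*2^m + 2^m + 2^k + s = (2^k + 2^m) + (s + 2^m*s) := by ring
  have e7 : s*2^m + 2^k + s + 1 = (2^k+1) + (s + 2^m*s) := by ring
  have e8 : 2^m + 2^k + 2*s = (2^k + 2^m) + 2*s := by ring
  have e9 : 2^k + 2*s + 1 = (2^k+1) + 2*s := by ring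
  rw [e1, e2, e3, e4, e5, e6, e7, e8, e9]
  simp only [pow_add, pow_mul]
  ring

end auxfield

theorem stmt_8 (m k s : ℕ) (hm : 0 < m) (hme : Even m) (hk : 0 < k)
    (hv : padicValNat 2 k ≤ padicValNat 2 m)
    (hgcd : Nat.gcd (2 ^ k + 2 * s + 1) (2 ^ m - 1) = 1) :
    Function.Bijective (fun x : GaloisField 2 (2 * m) =>
      x ^ (2 ^ (k + m) + s * 2 ^ (m + 1) + 2 ^ m)
        + x ^ (2 ^ (k + m) + s * 2 ^ m + 2 ^ m + s)
        + x ^ (2 ^ (k + m) + 2 ^ m + 2 * s)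
        + x ^ (s * 2 ^ (m + 1) + 2 ^ m + 2 ^ k)
        + x ^ (s * 2 ^ (m + 1) + 2 ^ k + 1)
        + x ^ (s * 2 ^ m + 2 ^ m + 2 ^ k + s)
        + x ^ (s * 2 ^ m + 2 ^ k + s + 1)
        + x ^ (2 ^ m + 2 ^ k + 2 * s)
        + x ^ (2 ^ k + 2 * s + 1)) := by
  set F := GaloisField 2 (2 * m) with hFdef
  haveI : Fintype F := Fintype.ofFinite _
  have h2m0 : 2*m ≠ 0 := by omega
  have hcard : Fintype.card F = 2^(2*m) := by
    rw [← Nat.card_eq_fintype_card]; exact GaloisField.card 2 (2*m) h2m0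
  have htwo : (2 : F) = 0 := by
    have h := CharP.cast_eq_zero F 2; exact_mod_cast h
  have frob : ∀ (x y : F) (n : ℕ), (x+y)^(2^n) = x^(2^n)+y^(2^n) :=
    fun x y n => add_pow_char_pow x y 2 n
  have hpowcard : ∀ z : F, z^(2^(2*m)) = z := fun z => by
    rw [← hcard]; exact FiniteField.pow_card z
  have hQsub : (2^m - 1) * (2^m + 1) = 2^(2*m) - 1 := by
    have h1 : (1:ℕ) ≤ 2^m := Nat.one_le_two_pow
    have h2 : 2^(2*m) = 2^m * 2^m := by rw [two_mul, pow_add]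
    have h3 : (1:ℕ) ≤ 2^m * 2^m := Nat.one_le_iff_ne_zero.mpr (by positivity)
    rw [h2]; zify [h1, h3]; ring
  have hmu : ∀ x : F, x ≠ 0 → (x^(2^m-1))^(2^m+1) = 1 := by
    intro x hx
    rw [← pow_mul, hQsub, ← hcard]
    exact FiniteField.pow_card_sub_one_eq_one x hx
  have hux : ∀ x : F, x^(2^m-1) * x = x^(2^m) := by
    intro x
    rw [← pow_succ]; congr 1
    have h1 : (1:ℕ) ≤ 2^m := Nat.one_le_two_pow
    omega
  -- subfield descent lemmas
  have hsub : ∀ z : F, z^(2^k) = z → z^(2^m) = z := by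
    intro z hz
    have hg : z^(2^(Nat.gcd k (2*m))) = z := pow_frob_gcd z k (2*m) hz (hpowcard z)
    rw [gcd_two_mul_aux m k hm hk hv] at hg
    exact pow_frob_dvd z _ m (Nat.gcd_dvd_right k m) hg
  have hsub2 : ∀ z : F, z^(2^2) = z → z^(2^m) = z :=
    fun z hz => pow_frob_dvd z 2 m hme.two_dvd hz
  -- cube roots of unity
  have hcube : ∀ w : F, w^2 + w + 1 = 0 → w^(2^m) * w = 1 → False := by
    intro w h0 hw
    have hsq : w^2 = w + 1 := by linear_combination h0 - (w+1)*htwo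
    have h4 : w^(2^2) = w := by
      have h5 : w^(2^2) = (w^2)^2 := by
        rw [show (2:ℕ)^2 = 2*2 by norm_num, pow_mul]
      rw [h5, hsq]
      linear_combination hsq + (w+1)*htwo
    rw [hsub2 w h4] at hw
    have hw0 : w = 0 := by linear_combination hw - hsq
    rw [hw0] at hw; simp at hw
  -- nonvanishing of h2-part
  have hH2 : ∀ u : F, u^(2^m+1) = 1 → u^(2*s) + u^s + 1 ≠ 0 := by
    intro u hu h0
    have h2s : u^(2*s) = (u^s)^2 := pow_mul' u 2 s
    rw [h2s] at h0
    apply hcube (u^s) h0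
    have h1 : (u^s)^(2^m) * (u^s) = (u^(2^m+1))^s := by
      rw [← pow_succ, pow_right_comm]
    rw [h1, hu, one_pow]
  -- nonvanishing of h1-part
  have hH1 : ∀ u : F, u^(2^m+1) = 1 → u^(2^k+1) + u + 1 ≠ 0 := by
    intro u hu h0
    have hUu : u^(2^m) * u = 1 := by rw [← pow_succ]; exact hu
    have h1 : u^(2^k+1) = u + 1 := by linear_combination h0 - (u+1)*htwo
    have hq1 : (u^(2^m))^(2^k+1) = u^(2^m) + 1 := by
      have h2 := congrArg (·^(2^m)) h1
      rw [pow_right_comm, frob u 1 m, one_pow] at h2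
      exact h2
    have h3 : (u^(2^m)+1) * u^(2^k+1) = 1 := by
      have h4 := congrArg (· * u^(2^k+1)) hq1
      rw [← mul_pow, hUu, one_pow] at h4
      exact h4.symm
    have hKu : u^(2^k) = u := by
      linear_combination h3 + u^(2^k)*hUu + h1
        + (u^(2^k) + 1 - u^(2^m)*u^(2^k+1) - u^(2^k+1))*htwo
    have hsq : u^2 + u + 1 = 0 := by
      linear_combination -h1 - u*hKu + (u*u^(2^k))*htwo
    exact hcube u (by linear_combination hsq) hUu
  -- the polynomial
  set f : F → F := (fun x : F =>
      x ^ (2 ^ (k + m) + s * 2 ^ (m + 1) + 2 ^ m)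
        + x ^ (2 ^ (k + m) + s * 2 ^ m + 2 ^ m + s)
        + x ^ (2 ^ (k + m) + 2 ^ m + 2 * s)
        + x ^ (s * 2 ^ (m + 1) + 2 ^ m + 2 ^ k)
        + x ^ (s * 2 ^ (m + 1) + 2 ^ k + 1)
        + x ^ (s * 2 ^ m + 2 ^ m + 2 ^ k + s)
        + x ^ (s * 2 ^ m + 2 ^ k + s + 1)
        + x ^ (2 ^ m + 2 ^ k + 2 * s)
        + x ^ (2 ^ k + 2 * s + 1)) with hfdef
  rw [← Finite.injective_iff_bijective]
  have hsplit : ∀ x : F, f x = (x^(2^k+1) + x^(2^k) * x^(2^m) + (x^(2^m))^(2^k+1))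
      * (x^(2*s) + x^s * (x^(2^m))^s + (x^(2^m))^(2*s)) := by
    intro x
    simp only [hfdef]
    exact split9 m k s x
  have hfu : ∀ x u : F, x^(2^m) = u*x →
      f x = x^(2^k+2*s+1) * ((u^(2^k+1)+u+1)*(u^(2*s)+u^s+1)) := by
    intro x u hq
    rw [hsplit x, hq]; ring
  have hf0 : f 0 = 0 := by
    simp only [hfdef]
    rw [zero_pow (by positivity), zero_pow (by positivity), zero_pow (by positivity),
      zero_pow (by positivity), zero_pow (by positivity), zero_pow (by positivity),
      zero_pow (by positivity), zero_pow (by positivity), zero_pow (by positivity)]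
    simp
  have hfne : ∀ x : F, x ≠ 0 → f x ≠ 0 := by
    intro x hx
    have hu1 : (x^(2^m-1))^(2^m+1) = 1 := hmu x hx
    rw [hfu x (x^(2^m-1)) (hux x).symm]
    exact mul_ne_zero (pow_ne_zero _ hx) (mul_ne_zero (hH1 _ hu1) (hH2 _ hu1))
  -- key Frobenius equation
  have EKey : ∀ x u : F, x ≠ 0 → u = x^(2^m-1) →
      (f x)^(2^m) * (u^(2^k+1)+u+1) = f x * (u^(2^k+1)+u^(2^k)+1) := by
    intro x u hx hud
    have hu1 : u^(2^m+1) = 1 := by rw [hud]; exact hmu x hx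
    have hUu : u^(2^m) * u = 1 := by rw [← pow_succ]; exact hu1
    have hxq : x^(2^m) = u * x := by rw [hud, hux x]
    have hf : f x = x^(2^k+2*s+1) * ((u^(2^k+1)+u+1)*(u^(2*s)+u^s+1)) := hfu x u hxq
    have hpUK : (u^(2^m))^(2^k+1) * u^(2^k+1) = 1 := by
      rw [← mul_pow, hUu, one_pow]
    have hpUs : (u^(2^m))^s * u^s = 1 := by rw [← mul_pow, hUu, one_pow]
    have hpU2s : (u^(2^m))^(2*s) * u^(2*s) = 1 := by rw [← mul_pow, hUu, one_pow]
    have m1 : u^(2^k+1) * ((u^(2^m))^(2^k+1)+(u^(2^m))+1) = u^(2^k+1)+u^(2^k)+1 := by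
      linear_combination hpUK + u^(2^k)*hUu
    have m2 : u^(2*s) * ((u^(2^m))^(2*s)+(u^(2^m))^s+1) = u^(2*s)+u^s+1 := by
      linear_combination hpU2s + u^s*hpUs
    have hfq : (f x)^(2^m) = (u^(2^k+1)*u^(2*s)) * x^(2^k+2*s+1) *
        (((u^(2^m))^(2^k+1)+u^(2^m)+1) * ((u^(2^m))^(2*s)+(u^(2^m))^s+1)) := by
      rw [hf, mul_pow, mul_pow]
      rw [pow_right_comm x (2^k+2*s+1) (2^m), hxq, mul_pow u x]
      rw [frob (u^(2^k+1)+u) 1 m, frob (u^(2^k+1)) u m, one_pow,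
        pow_right_comm u (2^k+1) (2^m)]
      rw [frob (u^(2*s)+u^s) 1 m, frob (u^(2*s)) (u^s) m, one_pow,
        pow_right_comm u (2*s) (2^m), pow_right_comm u s (2^m)]
      ring
    rw [hfq, hf]
    linear_combination
      (x^(2^k+2*s+1)*(u^(2^k+1)+u+1)*(u^(2*s)*((u^(2^m))^(2*s)+(u^(2^m))^s+1)))*m1
      + (x^(2^k+2*s+1)*(u^(2^k+1)+u+1)*(u^(2^k+1)+u^(2^k)+1))*m2
  -- structure of the "line": for w on the unit circle, w ≠ 1
  have lineL : ∀ w : F, w ≠ 1 → w^(2^m+1) = 1 →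
      ((w+1)⁻¹ * w = (w+1)⁻¹ + 1) ∧ (((w+1)⁻¹)^(2^m) = (w+1)⁻¹ + 1) := by
    intro w hw1 hwu
    have hWw : w^(2^m) * w = 1 := by rw [← pow_succ]; exact hwu
    have hwp1 : w + 1 ≠ 0 := by
      intro h
      exact hw1 (by linear_combination h - htwo)
    set c := (w+1)⁻¹ with hcdef
    have hc1 : c * (w+1) = 1 := inv_mul_cancel₀ hwp1
    have hcw : c * w = c + 1 := by linear_combination hc1 - c*htwo
    have hwqne : w^(2^m) + 1 ≠ 0 := by
      intro h
      have h1 : w^(2^m) = 1 := by linear_combination h - htwo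
      rw [h1, one_mul] at hWw
      exact hw1 hWw
    have hcq1 : c^(2^m) * (w^(2^m)+1) = 1 := by
      have h1 : (c*(w+1))^(2^m) = 1 := by rw [hc1, one_pow]
      rw [mul_pow, frob w 1 m, one_pow] at h1
      exact h1
    have hcq2 : (c+1) * (w^(2^m)+1) = 1 := by
      linear_combination (-(w^(2^m)))*hcw + c*hWw + c*htwo
    exact ⟨hcw, mul_right_cancel₀ hwqne (hcq1.trans hcq2.symm)⟩
  -- the two fractional-polynomial identities on the line
  have hmi : ∀ (c w : F), c * w = c + 1 →
      (c^(2^k+1) * (w^(2^k+1)+w+1) = c^(2^k+1)+c+1) ∧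
      (c^(2^k+1) * (w^(2^k+1)+w^(2^k)+1) = c^(2^k+1)+c^(2^k)+1) := by
    intro c w hcw
    have hK : c^(2^k) * w^(2^k) = c^(2^k) + 1 := by
      have h1 : (c*w)^(2^k) = c^(2^k) + 1 := by rw [hcw, frob c 1 k, one_pow]
      rw [mul_pow] at h1; exact h1
    constructor
    · linear_combination (c*w)*hK + (2*c^(2^k)+1)*hcw + (c^(2^k)*c + c^(2^k))*htwo
    · linear_combination (c*w)*hK + c*hK + (c^(2^k)+1)*hcw + (c*c^(2^k)+c)*htwo
  -- injectivity on the unit circle of the fractional map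
  have circInj : ∀ u v : F, u^(2^m+1) = 1 → v^(2^m+1) = 1 →
      (u^(2^k+1)+u^(2^k)+1) * (v^(2^k+1)+v+1) = (v^(2^k+1)+v^(2^k)+1) * (u^(2^k+1)+u+1) →
      u = v := by
    intro u v hu1 hv1 GE
    have hdeg1 : ∀ x : F, x^(2^m+1) = 1 → x^(2^k) = x → x = 1 := by
      intro x hx1 hxK
      have hxq : x^(2^m) = x := hsub x hxK
      have hx2 : x * x = 1 := by
        have h11 := hx1
        rw [pow_succ, hxq] at h11
        exact h11
      have h9 : (x+1)^2 = 0 := by linear_combination hx2 + (x+1)*htwo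
      have h10 : x + 1 = 0 :=
        (pow_eq_zero_iff (by norm_num : (2:ℕ) ≠ 0)).mp h9
      linear_combination h10 - htwo
    by_cases hu1' : u = 1
    · by_cases hv1' : v = 1
      · rw [hu1', hv1']
      · rw [hu1'] at GE
        simp only [one_pow] at GE
        have hvK : v^(2^k) = v := by
          linear_combination -GE + (v - v^(2^k))*htwo
        rw [hu1', hdeg1 v hv1 hvK]
    · by_cases hv1' : v = 1
      · rw [hv1'] at GE
        simp only [one_pow] at GE
        have huK : u^(2^k) = u := by
          linear_combination GE + (u - u^(2^k))*htwo
        rw [hv1', hdeg1 u hu1 huK]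
      · -- main case
        obtain ⟨haau, haaq⟩ := lineL u hu1' hu1
        obtain ⟨hbbv, hbbq⟩ := lineL v hv1' hv1
        set aa := (u+1)⁻¹ with haadef
        set bb := (v+1)⁻¹ with hbbdef
        obtain ⟨mi1a, mi2a⟩ := hmi aa u haau
        obtain ⟨mi1b, mi2b⟩ := hmi bb v hbbv
        have GE' : (aa^(2^k+1)+aa+1) * (bb^(2^k+1)+bb^(2^k)+1)
            = (aa^(2^k+1)+aa^(2^k)+1) * (bb^(2^k+1)+bb+1) := by
          rw [← mi1a, ← mi2b, ← mi2a, ← mi1b]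
          linear_combination (-(aa^(2^k+1)*bb^(2^k+1)))*GE
        have haabb : aa = bb := by
          by_contra hne
          set t := aa + bb with htdef
          have ht0 : t ≠ 0 := by
            intro h
            apply hne
            rw [htdef] at h
            linear_combination h - bb*htwo
          have hbbt : bb = aa + t := by rw [htdef]; linear_combination -aa*htwo
          have hbbKt : bb^(2^k) = aa^(2^k) + t^(2^k) := by
            rw [hbbt]; exact frob aa t k
          have hmaster := master_id htwo aa t (aa^(2^k)) (t^(2^k)) bb (bb^(2^k)) hbbt hbbKt
          have hX0 : t*((aa^(2^k))^2+aa^(2^k)+1) + t^(2^k)*(aa^2+aa+1)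
              + t^(2^k)*t*(aa^(2^k)+aa) = 0 := by
            rw [← hmaster]
            linear_combination GE' + ((aa^(2^k+1)+aa^(2^k)+1)*(bb^(2^k+1)+bb+1))*htwo
          set w := (aa^2+aa+1) * t⁻¹ with hwdef
          have hwt : w * t = aa^2+aa+1 := by
            rw [hwdef]; exact inv_mul_cancel_right₀ ht0 _
          have hwK : w^(2^k) + w = aa^(2^k) + aa := by
            have hwtK : w^(2^k) * t^(2^k) = (aa^(2^k))^2 + aa^(2^k) + 1 := by
              have h1 := congrArg (·^(2^k)) hwt
              rw [mul_pow] at h1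
              rw [h1, frob (aa^2+aa) 1 k, frob (aa^2) aa k, one_pow, pow_right_comm]
            have h1 : (w^(2^k) + w) * (t^(2^k) * t) = (aa^(2^k)+aa) * (t^(2^k)*t) := by
              linear_combination t*hwtK + t^(2^k)*hwt + hX0
                - ((aa^(2^k)+aa)*t^(2^k)*t)*htwo
            exact mul_right_cancel₀ (mul_ne_zero (pow_ne_zero _ ht0) ht0) h1
          set z := w + aa with hzdef
          have hzK : z^(2^k) = z := by
            rw [hzdef, frob w aa k]
            linear_combination hwK + (aa^(2^k) - w)*htwo
          have hzq : z^(2^m) = z := hsub z hzK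
          have htq : t^(2^m) = t := by
            rw [htdef, frob aa bb m, haaq, hbbq]
            linear_combination htwo
          have hQq : (aa^2+aa+1)^(2^m) = aa^2+aa+1 := by
            rw [frob (aa^2+aa) 1 m, frob (aa^2) aa m, one_pow, pow_right_comm, haaq]
            linear_combination (aa+1)*htwo
          have hwq : w^(2^m) = w := by
            rw [hwdef, mul_pow, hQq, inv_pow t (2^m), htq]
          have haa2 : aa = z + w := by rw [hzdef]; linear_combination -w*htwo
          have haaq' : aa^(2^m) = aa := by
            rw [haa2, frob z w m, hzq, hwq]
          rw [haaq] at haaq'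
          exact one_ne_zero (α := F) (by linear_combination haaq')
        have huv1 : u + 1 = v + 1 := by
          apply inv_injective
          rw [← haadef, ← hbbdef]
          exact haabb
        linear_combination huv1
  -- main argument
  intro a b hab
  have hab' : f a = f b := hab
  by_cases ha0 : a = 0
  · by_cases hb0 : b = 0
    · rw [ha0, hb0]
    · exact absurd (by rw [← hab', ha0, hf0]) (hfne b hb0)
  · by_cases hb0 : b = 0
    · exact absurd (by rw [hab', hb0, hf0]) (hfne a ha0)
    · -- both nonzero
      set u := a^(2^m-1) with hudef
      set v := b^(2^m-1) with hvdef
      have hu1 : u^(2^m+1) = 1 := hmu a ha0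
      have hv1 : v^(2^m+1) = 1 := hmu b hb0
      have hEa := EKey a u ha0 hudef
      have hEb := EKey b v hb0 hvdef
      rw [← hab'] at hEb
      have hfane : f a ≠ 0 := hfne a ha0
      have GE : (u^(2^k+1)+u^(2^k)+1) * (v^(2^k+1)+v+1)
          = (v^(2^k+1)+v^(2^k)+1) * (u^(2^k+1)+u+1) := by
        apply mul_left_cancel₀ hfane
        calc f a * ((u^(2^k+1)+u^(2^k)+1) * (v^(2^k+1)+v+1))
            = (f a * (u^(2^k+1)+u^(2^k)+1)) * (v^(2^k+1)+v+1) := by ring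
          _ = ((f a)^(2^m) * (u^(2^k+1)+u+1)) * (v^(2^k+1)+v+1) := by rw [hEa]
          _ = ((f a)^(2^m) * (v^(2^k+1)+v+1)) * (u^(2^k+1)+u+1) := by ring
          _ = (f a * (v^(2^k+1)+v^(2^k)+1)) * (u^(2^k+1)+u+1) := by rw [hEb]
          _ = f a * ((v^(2^k+1)+v^(2^k)+1) * (u^(2^k+1)+u+1)) := by ring
      have huv : u = v := circInj u v hu1 hv1 GE
      -- finish
      have hfa2 : f a = a^(2^k+2*s+1) * ((u^(2^k+1)+u+1)*(u^(2*s)+u^s+1)) :=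
        hfu a u (hux a).symm
      have hfb2 : f b = b^(2^k+2*s+1) * ((u^(2^k+1)+u+1)*(u^(2*s)+u^s+1)) := by
        have h1 : b^(2^m) = v*b := (hux b).symm
        rw [huv]
        exact hfu b v h1
      have hH : (u^(2^k+1)+u+1)*(u^(2*s)+u^s+1) ≠ 0 :=
        mul_ne_zero (hH1 u hu1) (hH2 u hu1)
      have hd : a^(2^k+2*s+1) = b^(2^k+2*s+1) := by
        apply mul_right_cancel₀ hH
        rw [← hfa2, ← hfb2]; exact hab'
      have hr1 : (a/b)^(2^k+2*s+1) = 1 := by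
        rw [div_pow, hd, div_self (pow_ne_zero _ hb0)]
      have hr2 : (a/b)^(2^m-1) = 1 := by
        rw [div_pow, ← hudef, ← hvdef, huv, div_self]
        rw [hvdef]
        exact pow_ne_zero _ hb0
      have hr : a/b = 1 := by
        have o1 := orderOf_dvd_of_pow_eq_one hr1
        have o2 := orderOf_dvd_of_pow_eq_one hr2
        have h3 : orderOf (a/b) ∣ 1 := hgcd ▸ Nat.dvd_gcd o1 o2
        rw [Nat.dvd_one] at h3
        exact orderOf_eq_one_iff.mp h3
      field_simp at hr
      exact hr
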